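/- Let c̄, s̄, f, g, r be real with r ≠ 0, and suppose the exact values c = f/r', s = g/r' with r' = sqrt(f^2+g^2) differ from c̄, s̄ by δc, δs. If c̄^2 + s̄^2 = 1 and c̄*g - s̄*f = 0 and f^2+g^2 = r^2 with r > 0, then δc = δs = 0 or (δc, δs) = (-2c̄, -2s̄); combined with the sign condition c̄*f + s̄*g > 0 the only solution is δc = δs = 0. (Exact satisfaction of the first two conditions plus positivity characterizes the exact rotation.) -/

import Mathlib

theorem stmt_12 (f g cb sb : ℝ) (h : f^2 + g^2 > 0)
    (r : ℝ) (hr : r = Real.sqrt (f^2 + g^2))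
    (hnorm : cb^2 + sb^2 = 1) (horth : cb * g = sb * f)
    (hpos : cb * f + sb * g > 0) :
    cb = f / r ∧ sb = g / r := by
  have hr0 : r > 0 := hr ▸ Real.sqrt_pos.mpr h
  have hr2 : r^2 = f^2 + g^2 := by
    rw [hr, Real.sq_sqrt h.le]
  have hsum : (cb * f + sb * g)^2 = r^2 := by nlinarith [sq_nonneg (cb*g - sb*f)]
  have heq : cb * f + sb * g = r := by
    nlinarith [sq_nonneg (cb * f + sb * g - r), sq_nonneg (cb * f + sb * g + r)]
  have hcb : cb * r = f := by
    have : (cb * r) * r = f * r := by linear_combination cb*hr2 + g*horth + f*heq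
    exact mul_right_cancel₀ hr0.ne' this
  have hsb : sb * r = g := by
    have : (sb * r) * r = g * r := by linear_combination sb*hr2 - f*horth + g*heq
    exact mul_right_cancel₀ hr0.ne' this
  constructor
  · field_simp [← hcb]
    exact hcb
  · field_simp [← hsb]
    exact hsb
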